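/- Let v₀ ∈ ℝ, b > 0, C ≥ 1, and let F : [v₀, ∞) → [0, ∞) be continuous and satisfy F(v₂) + b ∫_{v₁}^{v₂} F(v) dv ≤ C · F(v₁) for all v₀ ≤ v₁ ≤ v₂. Then F(v) ≤ C · F(v₀) · e^{-(b/C)(v - v₀)} for all v ≥ v₀. -/

import Mathlib

open Set MeasureTheory

theorem exponential_decay_from_integrated_decay
    (v₀ b C : ℝ) (hb : 0 < b) (hC : 1 ≤ C)
    (F : ℝ → ℝ)
    (hFc : ContinuousOn F (Set.Ici v₀))
    (hFnonneg : ∀ v ∈ Set.Ici v₀, 0 ≤ F v)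
    (hint : ∀ v₁ v₂ : ℝ, v₀ ≤ v₁ → v₁ ≤ v₂ →
      F v₂ + b * ∫ v in v₁..v₂, F v ≤ C * F v₁) :
    ∀ v : ℝ, v₀ ≤ v →
      F v ≤ C * F v₀ * Real.exp (-(b / C) * (v - v₀)) := by
  intro V hV
  have hC0 : (0:ℝ) < C := lt_of_lt_of_le one_pos hC
  set k : ℝ := b / C with hkdef
  have hk : 0 < k := div_pos hb hC0
  -- interval integrability of F on subintervals of [v₀, ∞)
  have hII : ∀ s t : ℝ, v₀ ≤ s → v₀ ≤ t → IntervalIntegrable F volume s t := by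
    intro s t hs ht
    exact (hFc.mono (fun x hx => le_trans (le_min hs ht) hx.1)).intervalIntegrable
  set g : ℝ → ℝ := fun s => ∫ v in s..V, F v with hgdef
  -- g is continuous on [v₀, V]
  have hg_eq : ∀ s ∈ Icc v₀ V, g s = (∫ v in v₀..V, F v) - ∫ v in v₀..s, F v := by
    intro s hs
    have := intervalIntegral.integral_add_adjacent_intervals
      (hII v₀ s le_rfl hs.1) (hII s V hs.1 (le_trans hs.1 hs.2))
    simp only [hgdef]
    linarith
  have hprimc : ContinuousOn (fun s => ∫ v in v₀..s, F v) (Icc v₀ V) := by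
    have hInt : IntegrableOn F (uIcc v₀ V) volume := by
      rw [uIcc_of_le hV]
      exact (hFc.mono (fun x hx => hx.1)).integrableOn_compact isCompact_Icc
    have := intervalIntegral.continuousOn_primitive_interval hInt
    rwa [uIcc_of_le hV] at this
  have hgc : ContinuousOn g (Icc v₀ V) :=
    (continuousOn_const.sub hprimc).congr hg_eq
  -- the exponential weight
  set E : ℝ → ℝ := fun s => Real.exp (k * (s - v₀)) with hEdef
  have hEc : Continuous E := by
    exact (Real.continuous_exp.comp (by continuity : Continuous fun s : ℝ => k * (s - v₀)))
  have hEderiv : ∀ s : ℝ, HasDerivAt E (k * E s) s := by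
    intro s
    have h1 : HasDerivAt (fun s : ℝ => k * (s - v₀)) k s := by
      simpa using ((hasDerivAt_id s).sub_const v₀).const_mul k
    simpa [hEdef, mul_comm] using h1.exp
  -- Φ and its derivative
  set Φ : ℝ → ℝ := fun s => E s * g s with hΦdef
  set Φ' : ℝ → ℝ := fun s => E s * (k * g s - F s) with hΦ'def
  have hgderiv : ∀ s ∈ Ioo v₀ V, HasDerivAt g (-F s) s := by
    intro s hs
    have hmem : Ici v₀ ∈ nhds s := Ici_mem_nhds hs.1
    refine intervalIntegral.integral_hasDerivAt_left (hII s V hs.1.le (le_trans hs.1.le hs.2.le))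
      ⟨Ici v₀, hmem, hFc.aestronglyMeasurable measurableSet_Ici⟩
      (hFc.continuousAt hmem)
  have hΦderiv : ∀ s ∈ Ioo v₀ V, HasDerivAt Φ (Φ' s) s := by
    intro s hs
    have := (hEderiv s).mul (hgderiv s hs)
    exact this.congr_deriv (by simp only [hΦ'def]; ring)
  have hΦc : ContinuousOn Φ (Icc v₀ V) := hEc.continuousOn.mul hgc
  have hΦ'c : ContinuousOn Φ' (Icc v₀ V) :=
    hEc.continuousOn.mul ((continuousOn_const.mul hgc).sub (hFc.mono (fun x hx => hx.1)))
  have hΦ'int : IntervalIntegrable Φ' volume v₀ V := by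
    apply ContinuousOn.intervalIntegrable
    rwa [uIcc_of_le hV]
  have hFTC : ∫ s in v₀..V, Φ' s = Φ V - Φ v₀ :=
    intervalIntegral.integral_eq_sub_of_hasDeriv_right_of_le hV hΦc
      (fun x hx => (hΦderiv x hx).hasDerivWithinAt) hΦ'int
  have hΦV : Φ V = 0 := by simp [hΦdef, hgdef]
  have hΦv₀ : Φ v₀ = g v₀ := by simp [hΦdef, hEdef]
  -- pointwise bound on Φ'
  have hpt : ∀ s ∈ Icc v₀ V, Φ' s ≤ (-(F V) / C) * E s := by
    intro s hs
    have h1 : F V + b * g s ≤ C * F s := hint s V hs.1 hs.2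
    have h2 : k * g s - F s ≤ -(F V) / C := by
      rw [le_div_iff₀ hC0]
      have hck : k * C = b := by rw [hkdef]; field_simp
      have hexp : (k * g s - F s) * C = b * g s - C * F s := by rw [← hck]; ring
      linarith
    have hE0 : 0 ≤ E s := le_of_lt (Real.exp_pos _)
    calc Φ' s = E s * (k * g s - F s) := rfl
      _ ≤ E s * (-(F V) / C) := by exact mul_le_mul_of_nonneg_left h2 hE0
      _ = (-(F V) / C) * E s := by ring
  -- compute ∫ E
  have hEint : ∫ s in v₀..V, E s = (E V - 1) / k := by
    have : ∀ s ∈ uIcc v₀ V, HasDerivAt (fun s => E s / k) (E s) s := by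
      intro s _
      simpa [mul_div_assoc, mul_div_cancel_left₀ _ (ne_of_gt hk)] using (hEderiv s).div_const k
    have h := intervalIntegral.integral_eq_sub_of_hasDerivAt this
      ((hEc.continuousOn).intervalIntegrable)
    rw [h]
    have : E v₀ = 1 := by simp [hEdef]
    rw [this]; ring
  -- integrate the pointwise bound
  have hmono : ∫ s in v₀..V, Φ' s ≤ ∫ s in v₀..V, (-(F V) / C) * E s := by
    apply intervalIntegral.integral_mono_on hV hΦ'int
    · exact (hEc.intervalIntegrable v₀ V).const_mul _
    · exact hpt
  have hrhs : ∫ s in v₀..V, (-(F V) / C) * E s = (-(F V) / C) * ((E V - 1) / k) := by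
    rw [intervalIntegral.integral_const_mul, hEint]
  -- put everything together
  have hkey : F V * (E V - 1) ≤ b * g v₀ := by
    rw [hFTC, hΦV, hΦv₀, hrhs] at hmono
    have hFV : 0 ≤ F V := hFnonneg V hV
    have hEV1 : (1:ℝ) ≤ E V := by
      rw [hEdef]
      exact Real.one_le_exp (by nlinarith [sub_nonneg.mpr hV])
    have hck : C * k = b := by rw [hkdef]; field_simp
    have h := hmono
    have hneg : (-(F V) / C) * ((E V - 1) / k) = -((F V / C) * ((E V - 1) / k)) := by ring
    rw [hneg] at h
    have h2 : (F V / C) * ((E V - 1) / k) ≤ g v₀ := by linarith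
    have h3 : (F V / C) * ((E V - 1) / k) = F V * (E V - 1) / b := by
      rw [← hck]; field_simp
    rw [h3] at h2
    rw [div_le_iff₀ hb] at h2
    nlinarith
  have hmain : F V + b * g v₀ ≤ C * F v₀ := hint v₀ V le_rfl hV
  have hfinal : F V * E V ≤ C * F v₀ := by nlinarith
  have hEVpos : 0 < E V := Real.exp_pos _
  have : F V ≤ C * F v₀ / E V := (le_div_iff₀ hEVpos).mpr hfinal
  calc F V ≤ C * F v₀ / E V := this
    _ = C * F v₀ * Real.exp (-(b / C) * (V - v₀)) := by
        rw [hEdef]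
        rw [show -(b / C) * (V - v₀) = -(k * (V - v₀)) by rw [hkdef]; ring]
        rw [Real.exp_neg, div_eq_mul_inv]
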